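/- Let d ≥ 1 and let S be a Hermiticity-preserving linear map from d×d complex matrices to m×m complex matrices. Then ‖S‖_ME ≤ ‖S‖_⋄ ≤ d·‖S‖_ME. -/

import Mathlib

open Matrix Kronecker ComplexOrder

noncomputable section

/-- The positive semidefinite square root of a PSD matrix, as `Matrix.PosSemidef.sqrt`
was defined in the older Mathlib (since removed). -/
noncomputable def posSemidefSqrt {n : Type*} [Fintype n] [DecidableEq n] {A : Matrix n n ℂ}
    (hA : A.PosSemidef) : Matrix n n ℂ :=
  (hA.1.eigenvectorUnitary : Matrix n n ℂ) * diagonal ((↑) ∘ (√·) ∘ hA.1.eigenvalues) *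
    (star (hA.1.eigenvectorUnitary : Matrix n n ℂ))

/-- The matrix absolute value `|A| = √(AᴴA)`. -/
noncomputable def matAbs {n : Type*} [Fintype n] [DecidableEq n] (A : Matrix n n ℂ) :
    Matrix n n ℂ :=
  posSemidefSqrt (Matrix.posSemidef_conjTranspose_mul_self A)

/-- The trace norm `‖A‖₁ = Tr √(AᴴA)`. -/
noncomputable def traceNorm {n : Type*} [Fintype n] [DecidableEq n] (A : Matrix n n ℂ) : ℝ :=
  ((matAbs A).trace).re

/-- The positive semidefinite square root of a PSD matrix (zero otherwise). -/
noncomputable def matSqrt {n : Type*} [Fintype n] [DecidableEq n] (σ : Matrix n n ℂ) :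
    Matrix n n ℂ :=
  open scoped Classical in
  if h : σ.PosSemidef then posSemidefSqrt h else 0

/-- A density matrix: positive semidefinite with unit trace. -/
def IsDensity {n : Type*} [Fintype n] [DecidableEq n] (σ : Matrix n n ℂ) : Prop :=
  σ.PosSemidef ∧ σ.trace = 1

/-- The Choi operator of a linear map between matrix algebras. -/
noncomputable def choi {d m : ℕ}
    (S : Matrix (Fin d) (Fin d) ℂ →ₗ[ℂ] Matrix (Fin m) (Fin m) ℂ) :
    Matrix (Fin m × Fin d) (Fin m × Fin d) ℂ :=
  ∑ i : Fin d, ∑ j : Fin d,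
    (S (Matrix.single i j 1)) ⊗ₖ (Matrix.single i j 1)

/-- The ME-norm `‖S‖_ME = ‖J(S)‖₁ / d`. -/
noncomputable def MENorm {d m : ℕ}
    (S : Matrix (Fin d) (Fin d) ℂ →ₗ[ℂ] Matrix (Fin m) (Fin m) ℂ) : ℝ :=
  traceNorm (choi S) / d

/-- The diamond norm: supremum over density matrices σ of
`‖(1 ⊗ √σ) J(S) (1 ⊗ √σ)‖₁`. -/
noncomputable def diamondNorm {d m : ℕ}
    (S : Matrix (Fin d) (Fin d) ℂ →ₗ[ℂ] Matrix (Fin m) (Fin m) ℂ) : ℝ :=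
  ⨆ σ : {σ : Matrix (Fin d) (Fin d) ℂ // IsDensity σ},
    traceNorm (((1 : Matrix (Fin m) (Fin m) ℂ) ⊗ₖ matSqrt σ.1) * choi S *
      ((1 : Matrix (Fin m) (Fin m) ℂ) ⊗ₖ matSqrt σ.1))

/-- The M-operator `M(S) = Tr_B |J(S)|`. -/
noncomputable def Mop {d m : ℕ}
    (S : Matrix (Fin d) (Fin d) ℂ →ₗ[ℂ] Matrix (Fin m) (Fin m) ℂ) :
    Matrix (Fin d) (Fin d) ℂ :=
  Matrix.of fun k l => ∑ b : Fin m, matAbs (choi S) (b, k) (b, l)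

/-- A quantum channel: completely positive (PSD Choi operator, by Choi's theorem)
and trace preserving. -/
def IsQChannel {d m : ℕ}
    (S : Matrix (Fin d) (Fin d) ℂ →ₗ[ℂ] Matrix (Fin m) (Fin m) ℂ) : Prop :=
  (choi S).PosSemidef ∧ ∀ ρ : Matrix (Fin d) (Fin d) ℂ, (S ρ).trace = ρ.trace


section
open scoped MatrixOrder
variable {n : Type*} [Fintype n] [DecidableEq n]
lemma posSemidefSqrt_eq_cfc {A : Matrix n n ℂ} (hA : A.PosSemidef) :
    posSemidefSqrt hA = CFC.sqrt A := by
  rw [CFC.sqrt_eq_real_sqrt A hA.nonneg, cfcₙ_eq_cfc, hA.1.cfc_eq]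
  rfl
lemma Matrix.PosSemidef.posSemidef_sqrt {A : Matrix n n ℂ} (hA : A.PosSemidef) :
    (posSemidefSqrt hA).PosSemidef := by
  rw [posSemidefSqrt_eq_cfc]; exact (CFC.sqrt_nonneg A).posSemidef
lemma Matrix.PosSemidef.sqrt_mul_self {A : Matrix n n ℂ} (hA : A.PosSemidef) :
    posSemidefSqrt hA * posSemidefSqrt hA = A := by
  rw [posSemidefSqrt_eq_cfc]; exact CFC.sqrt_mul_sqrt_self A hA.nonneg
lemma Matrix.PosSemidef.eq_sqrt_of_sq_eq {A : Matrix n n ℂ} (hA : A.PosSemidef)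
    (B : Matrix n n ℂ) {hB : B.PosSemidef} (h : A ^ 2 = B) : A = posSemidefSqrt hB := by
  rw [posSemidefSqrt_eq_cfc]
  exact (CFC.sqrt_unique (by rw [← h, pow_two]) hA.nonneg).symm
end

namespace StmtAux

variable {n : Type*} [Fintype n] [DecidableEq n]

/-- conjugation of a real diagonal by a matrix -/
noncomputable def cdm (U : Matrix n n ℂ) (f : n → ℝ) : Matrix n n ℂ :=
  U * Matrix.diagonal (fun i => (f i : ℂ)) * star U

lemma cdm_herm (U : Matrix n n ℂ) (f : n → ℝ) : (cdm U f).IsHermitian := by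
  unfold cdm Matrix.IsHermitian
  rw [star_eq_conjTranspose, conjTranspose_mul, conjTranspose_mul,
    conjTranspose_conjTranspose, diagonal_conjTranspose, mul_assoc]
  congr 2
  ext i
  simp [Pi.star_def]

lemma cdm_mul {U : Matrix n n ℂ} (hU : U ∈ Matrix.unitaryGroup n ℂ) (f g : n → ℝ) :
    cdm U f * cdm U g = cdm U (f * g) := by
  have h1 : star U * U = 1 := Matrix.mem_unitaryGroup_iff'.mp hU
  have h2 : cdm U f * cdm U g
      = U * ((Matrix.diagonal fun i => (f i : ℂ)) * (star U * U) *
        (Matrix.diagonal fun i => (g i : ℂ))) * star U := by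
    unfold cdm
    noncomm_ring
  have h3 : (fun i => (f i : ℂ) * (g i : ℂ)) = fun i => ((f * g) i : ℂ) := by
    funext i
    simp only [Pi.mul_apply, Complex.ofReal_mul]
  rw [h2, h1, Matrix.mul_one, Matrix.diagonal_mul_diagonal, h3]
  rfl

lemma cdm_sub (U : Matrix n n ℂ) (f g : n → ℝ) :
    cdm U f - cdm U g = cdm U (f - g) := by
  have h4 : (fun i => (f i : ℂ) - (g i : ℂ)) = fun i => ((f - g) i : ℂ) := by
    funext i
    simp only [Pi.sub_apply, Complex.ofReal_sub]
  have h3 : Matrix.diagonal (fun i => (f i : ℂ)) - Matrix.diagonal (fun i => (g i : ℂ))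
      = Matrix.diagonal (fun i => ((f - g) i : ℂ)) := by
    rw [Matrix.diagonal_sub, h4]
  unfold cdm
  rw [← Matrix.sub_mul, ← Matrix.mul_sub, h3]

lemma cdm_one {U : Matrix n n ℂ} (hU : U ∈ Matrix.unitaryGroup n ℂ) :
    cdm U (fun _ => (1:ℝ)) = 1 := by
  unfold cdm
  have h1 : U * star U = 1 := Matrix.mem_unitaryGroup_iff.mp hU
  have h2 : (fun _ : n => ((1:ℝ) : ℂ)) = fun _ => (1:ℂ) := by
    funext i
    exact Complex.ofReal_one
  rw [h2, Matrix.diagonal_one, Matrix.mul_one, h1]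

lemma cdm_trace {U : Matrix n n ℂ} (hU : U ∈ Matrix.unitaryGroup n ℂ) (f : n → ℝ) :
    (cdm U f).trace = ∑ i, (f i : ℂ) := by
  unfold cdm
  have h1 : star U * U = 1 := Matrix.mem_unitaryGroup_iff'.mp hU
  rw [trace_mul_cycle, h1, Matrix.one_mul, trace_diagonal]

lemma cdm_posSemidef (U : Matrix n n ℂ) {f : n → ℝ} (hf : ∀ i, 0 ≤ f i) :
    (cdm U f).PosSemidef := by
  have hd : (Matrix.diagonal (fun i => ((f i : ℂ)))).PosSemidef := by
    refine Matrix.posSemidef_diagonal_iff.mpr fun i => ?_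
    exact_mod_cast Complex.zero_le_real.mpr (hf i)
  simpa [cdm, star_eq_conjTranspose] using hd.mul_mul_conjTranspose_same U

lemma spectral {X : Matrix n n ℂ} (hX : X.IsHermitian) :
    X = cdm (hX.eigenvectorUnitary : Matrix n n ℂ) hX.eigenvalues := by
  convert hX.spectral_theorem using 2
  rw [Unitary.conjStarAlgAut_apply]; rfl

lemma matAbs_cdm {U : Matrix n n ℂ} (hU : U ∈ Matrix.unitaryGroup n ℂ) (f : n → ℝ) :
    matAbs (cdm U f) = cdm U (fun i => |f i|) := by
  unfold matAbs
  refine ((cdm_posSemidef U (fun i => abs_nonneg (f i))).eq_sqrt_of_sq_eq _ ?_).symm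
  have h3 : (fun i => |f i|) * (fun i => |f i|) = f * f := by
    funext i
    simp only [Pi.mul_apply]
    exact abs_mul_abs_self _
  rw [pow_two, cdm_mul hU, (cdm_herm U f).eq, cdm_mul hU, h3]

lemma matAbs_psd {M : Matrix n n ℂ} (hM : M.PosSemidef) : matAbs M = M := by
  unfold matAbs
  refine (hM.eq_sqrt_of_sq_eq _ ?_).symm
  rw [pow_two, hM.1.eq]

lemma trace_re_nonneg {M : Matrix n n ℂ} (hM : M.PosSemidef) : 0 ≤ M.trace.re := by
  rw [Matrix.trace]
  simp only [Complex.re_sum, Matrix.diag_apply]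
  refine Finset.sum_nonneg fun i _ => ?_
  have := hM.re_dotProduct_nonneg (Pi.single i 1)
  simpa [dotProduct, Matrix.mulVec, Pi.single_apply, Finset.sum_ite_eq,
    Finset.sum_ite_eq'] using this

lemma traceNorm_psd {M : Matrix n n ℂ} (hM : M.PosSemidef) : traceNorm M = M.trace.re := by
  rw [traceNorm, matAbs_psd hM]

lemma traceNorm_psd_nonneg {M : Matrix n n ℂ} (hM : M.PosSemidef) : 0 ≤ traceNorm M := by
  rw [traceNorm_psd hM]; exact trace_re_nonneg hM

lemma traceNorm_herm {X : Matrix n n ℂ} (hX : X.IsHermitian) :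
    traceNorm X = ∑ i, |hX.eigenvalues i| := by
  have hU := (hX.eigenvectorUnitary).2
  rw [traceNorm]
  conv_lhs => rw [spectral hX]
  rw [matAbs_cdm hU, cdm_trace hU]
  simp

/-- trace of a projection-compression is at most the trace, for PSD matrices -/
lemma proj_trace_le {B P : Matrix n n ℂ} (hB : B.PosSemidef) (hP : P.IsHermitian)
    (hP2 : P * P = P) : (P * B * P).trace.re ≤ B.trace.re := by
  have hQ : (1 - P).IsHermitian := by
    unfold Matrix.IsHermitian at hP ⊢
    rw [conjTranspose_sub, conjTranspose_one, hP]
  have hQ2 : (1 - P) * (1 - P) = 1 - P := by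
    rw [sub_mul, mul_sub, mul_sub, one_mul, mul_one, one_mul, hP2]
    abel
  have h1 : (P * B * P).trace = (B * P).trace := by
    rw [trace_mul_cycle, hP2, trace_mul_comm]
  have h2 : ((1 - P) * B * (1 - P)).trace = B.trace - (B * P).trace := by
    rw [trace_mul_cycle, hQ2, Matrix.sub_mul, Matrix.one_mul, trace_sub, trace_mul_comm]
  have h3 : 0 ≤ ((1 - P) * B * (1 - P)).trace.re := by
    refine trace_re_nonneg ?_
    have := hB.mul_mul_conjTranspose_same (1 - P)
    rwa [hQ.eq] at this
  rw [h2, Complex.sub_re] at h3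
  rw [h1]
  linarith

/-- key Jordan-type bound: if Y = B - C with B, C PSD then the trace norm of Y is at most
trace B + trace C. -/
lemma traceNorm_sub_le {B C : Matrix n n ℂ} (hB : B.PosSemidef) (hC : C.PosSemidef) :
    traceNorm (B - C) ≤ B.trace.re + C.trace.re := by
  set Y := B - C with hYdef
  have hY : Y.IsHermitian := by
    unfold Matrix.IsHermitian
    rw [conjTranspose_sub, hB.1.eq, hC.1.eq]
  set U : Matrix n n ℂ := (hY.eigenvectorUnitary : Matrix n n ℂ) with hUdef
  have hU := (hY.eigenvectorUnitary).2
  set lam := hY.eigenvalues with hlam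
  set chi : n → ℝ := fun i => if 0 ≤ lam i then 1 else 0 with hchi
  set P := cdm U chi with hPdef
  have hPherm : P.IsHermitian := cdm_herm U chi
  have hcc : chi * chi = chi := by
    funext i
    by_cases h : 0 ≤ lam i <;> simp [hchi, h]
  have hP2 : P * P = P := by
    rw [hPdef, cdm_mul hU, hcc]
  have hQherm : (1 - P).IsHermitian := by
    unfold Matrix.IsHermitian at hPherm ⊢
    rw [conjTranspose_sub, conjTranspose_one, hPherm]
  have hQ2 : (1 - P) * (1 - P) = 1 - P := by
    rw [sub_mul, mul_sub, mul_sub, one_mul, mul_one, one_mul, hP2]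
    abel
  -- P Y P = cdm U (pos part), (1-P) Y (1-P) = cdm U (neg part)
  have hYc : Y = cdm U lam := spectral hY
  have hclc : chi * lam * chi = fun i => max (lam i) 0 := by
    funext i
    simp only [Pi.mul_apply]
    by_cases h : 0 ≤ lam i
    · simp [hchi, h, max_eq_left h]
    · simp [hchi, h, max_eq_right (le_of_not_ge h)]
  have hPYP : P * Y * P = cdm U (fun i => max (lam i) 0) := by
    rw [hPdef, hYc, cdm_mul hU, cdm_mul hU, hclc]
  have hQYQ : (1 - P) * Y * (1 - P) = cdm U (fun i => min (lam i) 0) := by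
    have h1P : (1 : Matrix n n ℂ) - P = cdm U (fun i => 1 - chi i) := by
      have hff : (fun i => 1 - chi i) = (fun _ : n => (1:ℝ)) - chi := by
        funext i
        simp [Pi.sub_apply]
      rw [hff, ← cdm_sub, cdm_one hU, hPdef]
    have hqlq : (fun i => 1 - chi i) * lam * (fun i => 1 - chi i) = fun i => min (lam i) 0 := by
      funext i
      simp only [Pi.mul_apply]
      by_cases h : 0 ≤ lam i
      · simp [hchi, h, min_eq_right h]
      · simp [hchi, h, min_eq_left (le_of_not_ge h)]
    rw [h1P, hYc, cdm_mul hU, cdm_mul hU, hqlq]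
  -- traces
  have htrP : (P * Y * P).trace.re = ∑ i, max (lam i) 0 := by
    rw [hPYP, cdm_trace hU]
    simp
  have htrQ : ((1 - P) * Y * (1 - P)).trace.re = ∑ i, min (lam i) 0 := by
    rw [hQYQ, cdm_trace hU]
    simp
  -- bound the positive part
  have hb1 : (P * Y * P).trace.re ≤ B.trace.re := by
    have hexp : P * Y * P = P * B * P - P * C * P := by
      rw [hYdef]; noncomm_ring
    have hCP : 0 ≤ (P * C * P).trace.re := by
      refine trace_re_nonneg ?_
      have := hC.mul_mul_conjTranspose_same P
      rwa [hPherm.eq] at this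
    have := proj_trace_le hB hPherm hP2
    rw [hexp, trace_sub, Complex.sub_re]
    linarith
  have hb2 : -((1 - P) * Y * (1 - P)).trace.re ≤ C.trace.re := by
    have hexp : (1-P) * Y * (1-P) = (1-P) * B * (1-P) - (1-P) * C * (1-P) := by
      rw [hYdef]; noncomm_ring
    have hBP : 0 ≤ ((1-P) * B * (1-P)).trace.re := by
      refine trace_re_nonneg ?_
      have := hB.mul_mul_conjTranspose_same (1-P)
      rwa [hQherm.eq] at this
    have := proj_trace_le hC hQherm hQ2
    rw [hexp, trace_sub, Complex.sub_re]
    linarith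
  have habs : traceNorm Y = (∑ i, max (lam i) 0) + -(∑ i, min (lam i) 0) := by
    rw [traceNorm_herm hY, ← Finset.sum_neg_distrib, ← Finset.sum_add_distrib]
    refine Finset.sum_congr rfl fun i _ => ?_
    rcases le_or_gt 0 (lam i) with h | h
    · simp [← hlam, abs_of_nonneg h, max_eq_left h, min_eq_right h]
    · simp [← hlam, abs_of_neg h, max_eq_right h.le, min_eq_left h.le]
  calc traceNorm Y = (∑ i, max (lam i) 0) + -(∑ i, min (lam i) 0) := habs
    _ ≤ B.trace.re + C.trace.re := by
        rw [← htrP, ← htrQ]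
        exact add_le_add hb1 hb2

/-- contraction bound on traces: tr(A P A) ≤ tr P -/
lemma trace_conj_le {P A : Matrix n n ℂ} (hP : P.PosSemidef)
    (h1 : (1 - A * A).PosSemidef) : (A * P * A).trace.re ≤ P.trace.re := by
  set Q := posSemidefSqrt hP with hQdef
  have hQpsd := hP.posSemidef_sqrt
  have hQQ : Q * Q = P := hP.sqrt_mul_self
  have e1 : (A * P * A).trace = (Q * (A * A) * Q).trace := by
    rw [trace_mul_comm, ← Matrix.mul_assoc, ← hQQ, ← Matrix.mul_assoc, trace_mul_comm,
      ← Matrix.mul_assoc]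
  have e2 : P.trace = (Q * 1 * Q).trace := by rw [mul_one, hQQ]
  have e3 : (Q * 1 * Q).trace - (Q * (A*A) * Q).trace = (Q * (1 - A*A) * Q).trace := by
    rw [← trace_sub]
    congr 1
    noncomm_ring
  have h4 : 0 ≤ (Q * (1 - A*A) * Q).trace.re := by
    refine trace_re_nonneg ?_
    have := h1.mul_mul_conjTranspose_same Q
    rwa [hQpsd.1.eq] at this
  rw [e1, e2]
  have h5 := congrArg Complex.re e3
  rw [Complex.sub_re] at h5
  linarith

/-- the key inequality: conjugating a Hermitian matrix by a Hermitian contraction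
does not increase the trace norm. -/
lemma traceNorm_conj_le {X A : Matrix n n ℂ} (hX : X.IsHermitian) (hA : A.IsHermitian)
    (h1 : (1 - A * A).PosSemidef) : traceNorm (A * X * A) ≤ traceNorm X := by
  set U : Matrix n n ℂ := (hX.eigenvectorUnitary : Matrix n n ℂ) with hUdef
  have hU := (hX.eigenvectorUnitary).2
  set lam := hX.eigenvalues with hlam
  set P := cdm U (fun i => max (lam i) 0) with hPdef
  set N := cdm U (fun i => max (-lam i) 0) with hNdef
  have hPpsd : P.PosSemidef := cdm_posSemidef U (fun i => le_max_right _ _)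
  have hNpsd : N.PosSemidef := cdm_posSemidef U (fun i => le_max_right _ _)
  have hXPN : X = P - N := by
    have hfun : ((fun i => max (lam i) 0) - fun i => max (-lam i) 0) = lam := by
      funext i
      simp only [Pi.sub_apply]
      rcases le_or_gt 0 (lam i) with h | h
      · rw [max_eq_left h, max_eq_right (neg_nonpos.mpr h), sub_zero]
      · rw [max_eq_right h.le, max_eq_left (neg_nonneg.mpr h.le), zero_sub, neg_neg]
    rw [hPdef, hNdef, cdm_sub, hfun]
    exact spectral hX
  have hAXA : A * X * A = (A * P * A) - (A * N * A) := by
    rw [hXPN]; noncomm_ring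
  have hAPA : (A * P * A).PosSemidef := by
    have := hPpsd.mul_mul_conjTranspose_same A
    rwa [hA.eq] at this
  have hANA : (A * N * A).PosSemidef := by
    have := hNpsd.mul_mul_conjTranspose_same A
    rwa [hA.eq] at this
  have step1 : traceNorm (A * X * A) ≤ (A * P * A).trace.re + (A * N * A).trace.re := by
    rw [hAXA]
    exact traceNorm_sub_le hAPA hANA
  have step2 : (A * P * A).trace.re ≤ P.trace.re := trace_conj_le hPpsd h1
  have step3 : (A * N * A).trace.re ≤ N.trace.re := trace_conj_le hNpsd h1
  have hfin : traceNorm X = P.trace.re + N.trace.re := by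
    rw [traceNorm_herm hX, hPdef, hNdef, cdm_trace hU, cdm_trace hU]
    simp only [Complex.re_sum, Complex.ofReal_re]
    rw [← Finset.sum_add_distrib]
    refine Finset.sum_congr rfl fun i _ => ?_
    rcases le_or_gt 0 (lam i) with h | h
    · rw [abs_of_nonneg h, max_eq_left h, max_eq_right (neg_nonpos.mpr h), add_zero]
    · rw [abs_of_neg h, max_eq_right h.le, max_eq_left (neg_nonneg.mpr h.le), zero_add]
  rw [hfin]
  linarith

/-- a nonnegative real multiple of a PSD matrix is PSD -/
lemma psd_real_smul {M : Matrix n n ℂ} (hM : M.PosSemidef) {r : ℝ} (hr : 0 ≤ r) :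
    ((r : ℂ) • M).PosSemidef := by
  set s := Real.sqrt r with hs
  have key : (r:ℂ) • M = ((s:ℂ) • posSemidefSqrt hM)ᴴ * ((s:ℂ) • posSemidefSqrt hM) := by
    rw [conjTranspose_smul, hM.posSemidef_sqrt.1.eq, Matrix.smul_mul, Matrix.mul_smul,
      smul_smul, hM.sqrt_mul_self]
    congr 1
    rw [Complex.star_def, Complex.conj_ofReal, ← Complex.ofReal_mul, hs, Real.mul_self_sqrt hr]
  rw [key]
  exact posSemidef_conjTranspose_mul_self _

/-- scaling the trace norm by a nonnegative real -/
lemma traceNorm_real_smul (r : ℝ) (hr : 0 ≤ r) (X : Matrix n n ℂ) :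
    traceNorm ((r : ℂ) • X) = r * traceNorm X := by
  have hXpsd : (matAbs X).PosSemidef := (Matrix.posSemidef_conjTranspose_mul_self X).posSemidef_sqrt
  have habs : matAbs ((r : ℂ) • X) = (r : ℂ) • matAbs X := by
    unfold matAbs
    refine ((psd_real_smul hXpsd hr).eq_sqrt_of_sq_eq _ ?_).symm
    rw [pow_two, Matrix.smul_mul, Matrix.mul_smul, smul_smul, conjTranspose_smul,
      Matrix.smul_mul, Matrix.mul_smul, smul_smul]
    have : matAbs X * matAbs X = Xᴴ * X :=
      (Matrix.posSemidef_conjTranspose_mul_self X).sqrt_mul_self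
    rw [show (matAbs X : Matrix n n ℂ) = posSemidefSqrt (Matrix.posSemidef_conjTranspose_mul_self X) from rfl]
      at this ⊢
    rw [this]
    congr 1
    rw [Complex.star_def, Complex.conj_ofReal]
  rw [traceNorm, traceNorm, habs, trace_smul, smul_eq_mul]
  simp [Complex.mul_re]

variable {p q : Type*} [Fintype p] [DecidableEq p] [Fintype q] [DecidableEq q]

open Kronecker in
lemma kron_conjTranspose (A : Matrix p p ℂ) (B : Matrix q q ℂ) :
    (A ⊗ₖ B)ᴴ = Aᴴ ⊗ₖ Bᴴ := by
  ext ⟨i, j⟩ ⟨k, l⟩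
  simp [Matrix.conjTranspose_apply, Matrix.kroneckerMap_apply, star_mul']

open Kronecker in
lemma one_kron_psd {M : Matrix q q ℂ} (hM : M.PosSemidef) :
    ((1 : Matrix p p ℂ) ⊗ₖ M).PosSemidef := by
  have key : (1 : Matrix p p ℂ) ⊗ₖ M
      = ((1 : Matrix p p ℂ) ⊗ₖ posSemidefSqrt hM)ᴴ * ((1 : Matrix p p ℂ) ⊗ₖ posSemidefSqrt hM) := by
    rw [kron_conjTranspose, conjTranspose_one, hM.posSemidef_sqrt.1.eq,
      ← Matrix.mul_kronecker_mul, Matrix.one_mul, hM.sqrt_mul_self]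
  rw [key]
  exact posSemidef_conjTranspose_mul_self _

open Kronecker in
lemma one_kron_sub (A B : Matrix q q ℂ) :
    (1 : Matrix p p ℂ) ⊗ₖ (A - B) = (1 : Matrix p p ℂ) ⊗ₖ A - (1 : Matrix p p ℂ) ⊗ₖ B := by
  ext ⟨i, j⟩ ⟨k, l⟩
  simp [Matrix.kroneckerMap_apply, Matrix.sub_apply, mul_sub]

lemma density_le_one {σ : Matrix n n ℂ} (hσ : IsDensity σ) : (1 - σ).PosSemidef := by
  have hH : σ.IsHermitian := hσ.1.1
  set U : Matrix n n ℂ := (hH.eigenvectorUnitary : Matrix n n ℂ) with hUdef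
  have hU := (hH.eigenvectorUnitary).2
  set lam := hH.eigenvalues with hlam
  have hnn : ∀ i, 0 ≤ lam i := fun i => hσ.1.eigenvalues_nonneg i
  have hsum : ∑ i, lam i = 1 := by
    have h1 : σ.trace = ∑ i, (lam i : ℂ) := by
      conv_lhs => rw [spectral hH]
      rw [cdm_trace hU]
    rw [hσ.2] at h1
    have := congrArg Complex.re h1.symm
    simpa using this
  have hle : ∀ i, lam i ≤ 1 := by
    intro i
    calc lam i ≤ ∑ j, lam j :=
          Finset.single_le_sum (fun j _ => hnn j) (Finset.mem_univ i)
      _ = 1 := hsum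
  have h1σ : (1 : Matrix n n ℂ) - σ = cdm U (fun i => 1 - lam i) := by
    conv_lhs => rw [spectral hH, ← cdm_one hU]
    rw [cdm_sub]
    rfl
  rw [h1σ]
  exact cdm_posSemidef U (fun i => by simpa using hle i)

end StmtAux

/-- For a Hermiticity-preserving linear map `S` from `d×d` to `m×m`
complex matrices (`d ≥ 1`), `‖S‖_ME ≤ ‖S‖_⋄ ≤ d·‖S‖_ME`. -/
theorem stmt0 {d m : ℕ} (hd : 1 ≤ d)
    (S : Matrix (Fin d) (Fin d) ℂ →ₗ[ℂ] Matrix (Fin m) (Fin m) ℂ)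
    (hS : (choi S).IsHermitian) :
    MENorm S ≤ diamondNorm S ∧ diamondNorm S ≤ d * MENorm S := by
  classical
  have hdpos : (0:ℝ) < d := by exact_mod_cast hd
  have hdR : (0:ℝ) ≤ ((d:ℝ))⁻¹ := inv_nonneg.mpr hdpos.le
  set J := choi S with hJ
  set F : {σ : Matrix (Fin d) (Fin d) ℂ // IsDensity σ} → ℝ := fun σ =>
    traceNorm (((1 : Matrix (Fin m) (Fin m) ℂ) ⊗ₖ matSqrt σ.1) * choi S *
      ((1 : Matrix (Fin m) (Fin m) ℂ) ⊗ₖ matSqrt σ.1)) with hF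
  have hdia : diamondNorm S = ⨆ σ, F σ := rfl
  -- per-σ upper bound
  have hbound : ∀ σ : {σ : Matrix (Fin d) (Fin d) ℂ // IsDensity σ}, F σ ≤ traceNorm J := by
    rintro ⟨σ, hσ⟩
    have hσpsd := hσ.1
    have hsq : matSqrt σ = posSemidefSqrt hσpsd := dif_pos hσpsd
    set A := (1 : Matrix (Fin m) (Fin m) ℂ) ⊗ₖ matSqrt σ with hA
    have hAherm : A.IsHermitian := by
      unfold Matrix.IsHermitian
      rw [hA, StmtAux.kron_conjTranspose, conjTranspose_one, hsq, hσpsd.posSemidef_sqrt.1.eq]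
    have hAA : A * A = (1 : Matrix (Fin m) (Fin m) ℂ) ⊗ₖ σ := by
      rw [hA, hsq, ← Matrix.mul_kronecker_mul, Matrix.one_mul, hσpsd.sqrt_mul_self]
    have hpsd1 : ((1 : Matrix (Fin m × Fin d) (Fin m × Fin d) ℂ) - A * A).PosSemidef := by
      have h2 : (1 : Matrix (Fin m × Fin d) (Fin m × Fin d) ℂ) - A * A
          = (1 : Matrix (Fin m) (Fin m) ℂ) ⊗ₖ ((1 : Matrix (Fin d) (Fin d) ℂ) - σ) := by
        rw [StmtAux.one_kron_sub, Matrix.one_kronecker_one, hAA]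
      rw [h2]
      exact StmtAux.one_kron_psd (StmtAux.density_le_one hσ)
    exact StmtAux.traceNorm_conj_le hS hAherm hpsd1
  have hbdd : BddAbove (Set.range F) := by
    refine ⟨traceNorm J, ?_⟩
    rintro x ⟨σ, rfl⟩
    exact hbound σ
  -- the maximally mixed state
  set σ0 : Matrix (Fin d) (Fin d) ℂ := (((d:ℝ)⁻¹ : ℝ) : ℂ) • 1 with hσ0
  have hσ0psd : σ0.PosSemidef := StmtAux.psd_real_smul Matrix.PosSemidef.one hdR
  have hσ0trace : σ0.trace = 1 := by
    rw [hσ0, trace_smul, trace_one, smul_eq_mul]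
    push_cast
    field_simp
    simp
  have hdens : IsDensity σ0 := ⟨hσ0psd, hσ0trace⟩
  haveI : Nonempty {σ : Matrix (Fin d) (Fin d) ℂ // IsDensity σ} := ⟨⟨σ0, hdens⟩⟩
  set c : ℝ := Real.sqrt ((d:ℝ)⁻¹) with hc
  have hsqrt0 : matSqrt σ0 = ((c:ℝ):ℂ) • 1 := by
    unfold matSqrt
    rw [dif_pos hσ0psd]
    refine ((StmtAux.psd_real_smul Matrix.PosSemidef.one (Real.sqrt_nonneg _)).eq_sqrt_of_sq_eq
      _ ?_).symm
    rw [pow_two, Matrix.smul_mul, Matrix.one_mul, smul_smul, ← Complex.ofReal_mul, Real.mul_self_sqrt hdR]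
  have hval : F ⟨σ0, hdens⟩ = MENorm S := by
    have hkron : (1 : Matrix (Fin m) (Fin m) ℂ) ⊗ₖ matSqrt σ0
        = ((c:ℝ):ℂ) • (1 : Matrix (Fin m × Fin d) (Fin m × Fin d) ℂ) := by
      rw [hsqrt0, Matrix.kronecker_smul, Matrix.one_kronecker_one]
    have hmat : (((c:ℝ):ℂ) • (1 : Matrix (Fin m × Fin d) (Fin m × Fin d) ℂ)) * choi S *
        (((c:ℝ):ℂ) • 1) = (((d:ℝ)⁻¹ : ℝ) : ℂ) • choi S := by
      rw [Matrix.smul_mul, Matrix.one_mul, Matrix.mul_smul, Matrix.mul_one, smul_smul,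
        ← Complex.ofReal_mul, Real.mul_self_sqrt hdR]
    show traceNorm (((1 : Matrix (Fin m) (Fin m) ℂ) ⊗ₖ matSqrt σ0) * choi S *
      ((1 : Matrix (Fin m) (Fin m) ℂ) ⊗ₖ matSqrt σ0)) = MENorm S
    rw [hkron, hmat, StmtAux.traceNorm_real_smul _ hdR, MENorm]
    rw [div_eq_inv_mul]
  constructor
  · rw [hdia, ← hval]
    exact le_ciSup hbdd ⟨σ0, hdens⟩
  · rw [hdia]
    refine ciSup_le fun σ => ?_
    refine le_trans (hbound σ) ?_
    rw [MENorm, mul_div_cancel₀]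
    exact hdpos.ne'

end
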